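/- Let x ~ p₁ and y ~ p₂ be independent random vectors in R^d, each satisfying ACoM with parameters (C₁, c₁, c₁', d, σ₁) and (C₂, c₂, c₂', d, σ₂) respectively. Then the pair (x, y) ∈ R^{2d} satisfies: for every L-Lipschitz f: R^{2d} → R and every t > 0, P(|f(x,y) − E f(x,y)| > 2t) ≤ (C₁ + C₂) exp(−(t/(L max{σ₁, σ₂}))²) + (c₁ + c₂) exp(−min{c₁', c₂'} d). -/

import Mathlib

open MeasureTheory ProbabilityTheory Filter
open scoped ENNReal NNReal

private abbrev EucSp (d : ℕ) : Type := EuclideanSpace ℝ (Fin d)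

set_option maxHeartbeats 1000000 in
/-- ACoM for the pair of two independent random vectors: if `x ~ p₁` and `y ~ p₂` in `ℝ^d` are
independent and each satisfies ACoM with parameters `(Cᵢ, cᵢ, cᵢ', d, σᵢ)`, then `(x, y) ∈ ℝ^{2d}`
(with the Euclidean norm on the product) satisfies, for every `L`-Lipschitz `f : ℝ^{2d} → ℝ` and
`t > 0`,
`P(|f(x,y) − E f(x,y)| > 2t) ≤ (C₁+C₂) exp(−(t/(L max{σ₁,σ₂}))²) + (c₁+c₂) exp(−min{c₁',c₂'} d)`. -/
theorem stmt3 {Ω : Type*} [MeasureSpace Ω] [IsProbabilityMeasure (ℙ : Measure Ω)]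
    (d : ℕ) (C₁ C₂ c₁ c₂ c₁' c₂' σ₁ σ₂ : ℝ)
    (hC₁ : 0 < C₁) (hC₂ : 0 < C₂) (hc₁ : 0 ≤ c₁) (hc₂ : 0 ≤ c₂)
    (hc₁' : 0 < c₁') (hc₂' : 0 < c₂') (hσ₁ : 0 < σ₁) (hσ₂ : 0 < σ₂)
    (x y : Ω → EuclideanSpace ℝ (Fin d)) (hx : Measurable x) (hy : Measurable y)
    (hindep : IndepFun x y)
    (hACoMx : ∀ (L : NNReal) (h : EuclideanSpace ℝ (Fin d) → ℝ), LipschitzWith L h →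
      ∀ s : ℝ, 0 < s →
        (ℙ {ω : Ω | s < |h (x ω) - ∫ ω', h (x ω') ∂ℙ|}).toReal ≤
          C₁ * Real.exp (-(s / ((L : ℝ) * σ₁)) ^ 2) + c₁ * Real.exp (-c₁' * d))
    (hACoMy : ∀ (L : NNReal) (h : EuclideanSpace ℝ (Fin d) → ℝ), LipschitzWith L h →
      ∀ s : ℝ, 0 < s →
        (ℙ {ω : Ω | s < |h (y ω) - ∫ ω', h (y ω') ∂ℙ|}).toReal ≤
          C₂ * Real.exp (-(s / ((L : ℝ) * σ₂)) ^ 2) + c₂ * Real.exp (-c₂' * d)) :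
    ∀ (L : NNReal)
      (f : WithLp 2 (EuclideanSpace ℝ (Fin d) × EuclideanSpace ℝ (Fin d)) → ℝ),
      LipschitzWith L f →
      ∀ t : ℝ, 0 < t →
        (ℙ {ω : Ω | 2 * t <
            |f ((WithLp.equiv 2 _).symm (x ω, y ω)) -
              ∫ ω', f ((WithLp.equiv 2 _).symm (x ω', y ω')) ∂ℙ|}).toReal ≤
          (C₁ + C₂) * Real.exp (-(t / ((L : ℝ) * max σ₁ σ₂)) ^ 2) +
            (c₁ + c₂) * Real.exp (-(min c₁' c₂') * d) := by
  intro L f hf t ht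
  classical
  set f2 : EucSp d × EucSp d → ℝ :=
    fun p => f ((WithLp.equiv 2 (EucSp d × EucSp d)).symm p) with hf2
  -- distance formula
  have hdist : ∀ a a' b b' : EucSp d,
      dist ((WithLp.equiv 2 (EucSp d × EucSp d)).symm (a, b))
          ((WithLp.equiv 2 (EucSp d × EucSp d)).symm (a', b')) =
        Real.sqrt (dist a a' ^ 2 + dist b b' ^ 2) := by
    intro a a' b b'
    rw [WithLp.prod_dist_eq_of_L2]
    rfl
  -- Lipschitz in each coordinate
  have hLa : ∀ b : EucSp d, LipschitzWith L fun a => f2 (a, b) := by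
    intro b
    refine LipschitzWith.of_dist_le_mul fun a a' => ?_
    have h1 := hf.dist_le_mul ((WithLp.equiv 2 (EucSp d × EucSp d)).symm (a, b))
      ((WithLp.equiv 2 (EucSp d × EucSp d)).symm (a', b))
    rw [hdist] at h1
    simpa [hf2, Real.sqrt_sq dist_nonneg] using h1
  have hLb : ∀ a : EucSp d, LipschitzWith L fun b => f2 (a, b) := by
    intro a
    refine LipschitzWith.of_dist_le_mul fun b b' => ?_
    have h1 := hf.dist_le_mul ((WithLp.equiv 2 (EucSp d × EucSp d)).symm (a, b))
      ((WithLp.equiv 2 (EucSp d × EucSp d)).symm (a, b'))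
    rw [hdist] at h1
    simpa [hf2, Real.sqrt_sq dist_nonneg] using h1
  have hf2cont : Continuous f2 :=
    hf.continuous.comp (WithLp.prod_continuous_toLp 2 (EucSp d) (EucSp d))
  have hf2meas : Measurable f2 := hf2cont.measurable
  have hζ : Measurable fun ω => (x ω, y ω) := hx.prodMk hy
  set ν₁ : Measure (EucSp d) := Measure.map x ℙ with hν₁
  set ν₂ : Measure (EucSp d) := Measure.map y ℙ with hν₂
  haveI : IsProbabilityMeasure ν₁ := Measure.isProbabilityMeasure_map hx.aemeasurable
  haveI : IsProbabilityMeasure ν₂ := Measure.isProbabilityMeasure_map hy.aemeasurable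
  have hmap : Measure.map (fun ω => (x ω, y ω)) ℙ = ν₁.prod ν₂ :=
    (indepFun_iff_map_prod_eq_prod_map_map hx.aemeasurable hy.aemeasurable).1 hindep
  set g : EucSp d → ℝ := fun a => ∫ ω', f2 (a, y ω') ∂ℙ with hg
  set mF : ℝ := ∫ ω', f2 (x ω', y ω') ∂ℙ with hmF
  -- g via ν₂
  have hsecsm : ∀ a : EucSp d, Continuous fun b : EucSp d => f2 (a, b) := by
    intro a
    exact hf2cont.comp (continuous_const.prodMk continuous_id)
  have hgmap : ∀ a : EucSp d, g a = ∫ b, f2 (a, b) ∂ν₂ := fun a =>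
    (integral_map hy.aemeasurable (hsecsm a).aestronglyMeasurable).symm
  -- section integrability transfer (in ℙ form)
  have hsecPtran : ∀ a a' : EucSp d, Integrable (fun ω' => f2 (a, y ω')) ℙ →
      Integrable (fun ω' => f2 (a', y ω')) ℙ := by
    intro a a' hint
    have hdiffmeas : Measurable fun ω' => f2 (a', y ω') - f2 (a, y ω') :=
      ((hf2meas.comp (measurable_const.prodMk hy)).sub
        (hf2meas.comp (measurable_const.prodMk hy)))
    have hdiffint : Integrable (fun ω' => f2 (a', y ω') - f2 (a, y ω')) ℙ := by
      refine (integrable_const ((L : ℝ) * dist a' a)).mono'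
        hdiffmeas.aestronglyMeasurable
        (Filter.Eventually.of_forall fun ω' => ?_)
      have h2 := (hLa (y ω')).dist_le_mul a' a
      simpa [Real.dist_eq, Real.norm_eq_abs] using h2
    have hfe : (fun ω' => f2 (a', y ω')) =
        fun ω' => (f2 (a', y ω') - f2 (a, y ω')) + f2 (a, y ω') := by
      funext ω'; ring
    rw [hfe]
    exact hdiffint.add hint
  -- the main argument, assuming g Lipschitz and correct mean
  have main : LipschitzWith L g → (∫ ω', g (x ω') ∂ℙ) = mF →
      (ℙ {ω : Ω | 2 * t < |f2 (x ω, y ω) - mF|}).toReal ≤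
        (C₁ + C₂) * Real.exp (-(t / ((L : ℝ) * max σ₁ σ₂)) ^ 2) +
          (c₁ + c₂) * Real.exp (-(min c₁' c₂') * d) := by
    intro hgLip hgm
    have hgmeas : Measurable g := hgLip.continuous.measurable
    set r₁ : ℝ := C₁ * Real.exp (-(t / ((L : ℝ) * σ₁)) ^ 2) + c₁ * Real.exp (-c₁' * d) with hr₁
    set r₂ : ℝ := C₂ * Real.exp (-(t / ((L : ℝ) * σ₂)) ^ 2) + c₂ * Real.exp (-c₂' * d) with hr₂
    have hr₁0 : 0 ≤ r₁ := by positivity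
    have hr₂0 : 0 ≤ r₂ := by positivity
    -- bound on the g-part
    have hE2 : ℙ {ω : Ω | t < |g (x ω) - mF|} ≤ ENNReal.ofReal r₁ := by
      have h := hACoMx L g hgLip t ht
      rw [hgm] at h
      exact (ENNReal.le_ofReal_iff_toReal_le (measure_ne_top _ _) hr₁0).2 h
    -- bound on the conditional part, via Fubini
    have hE1 : ℙ {ω : Ω | t < |f2 (x ω, y ω) - g (x ω)|} ≤ ENNReal.ofReal r₂ := by
      set S : Set (EucSp d × EucSp d) := {p | t < |f2 p - g p.1|} with hS
      have hSm : MeasurableSet S := by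
        have hm : Measurable fun p : EucSp d × EucSp d => |f2 p - g p.1| :=
          (hf2meas.sub (hgmeas.comp measurable_fst)).abs
        exact measurableSet_lt measurable_const hm
      have heq : ℙ {ω : Ω | t < |f2 (x ω, y ω) - g (x ω)|} = (ν₁.prod ν₂) S := by
        rw [← hmap, Measure.map_apply hζ hSm]
        rfl
      rw [heq, Measure.prod_apply hSm]
      have hpt : ∀ a : EucSp d, ν₂ (Prod.mk a ⁻¹' S) ≤ ENNReal.ofReal r₂ := by
        intro a
        have hpre : Prod.mk a ⁻¹' S = {b : EucSp d | t < |f2 (a, b) - g a|} := rfl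
        have hsetm : MeasurableSet {b : EucSp d | t < |f2 (a, b) - g a|} := by
          have hm : Measurable fun b : EucSp d => |f2 (a, b) - g a| :=
            ((hsecsm a).measurable.sub measurable_const).abs
          exact measurableSet_lt measurable_const hm
        have heq2 : ν₂ (Prod.mk a ⁻¹' S) = ℙ {ω : Ω | t < |f2 (a, y ω) - g a|} := by
          rw [hpre, hν₂, Measure.map_apply hy hsetm]
          rfl
        rw [heq2]
        have h := hACoMy L (fun b => f2 (a, b)) (hLb a) t ht
        exact (ENNReal.le_ofReal_iff_toReal_le (measure_ne_top _ _) hr₂0).2 h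
      calc ∫⁻ a, ν₂ (Prod.mk a ⁻¹' S) ∂ν₁ ≤ ∫⁻ _, ENNReal.ofReal r₂ ∂ν₁ :=
            lintegral_mono hpt
        _ = ENNReal.ofReal r₂ := by simp
    -- union bound
    have hsub : {ω : Ω | 2 * t < |f2 (x ω, y ω) - mF|} ⊆
        {ω : Ω | t < |f2 (x ω, y ω) - g (x ω)|} ∪ {ω : Ω | t < |g (x ω) - mF|} := by
      intro ω hω
      simp only [Set.mem_setOf_eq] at hω
      by_contra hc
      simp only [Set.mem_union, Set.mem_setOf_eq, not_or, not_lt] at hc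
      have htri := abs_sub_le (f2 (x ω, y ω)) (g (x ω)) mF
      linarith [hc.1, hc.2]
    have hle : ℙ {ω : Ω | 2 * t < |f2 (x ω, y ω) - mF|} ≤ ENNReal.ofReal (r₂ + r₁) := by
      calc ℙ {ω : Ω | 2 * t < |f2 (x ω, y ω) - mF|}
          ≤ ℙ ({ω : Ω | t < |f2 (x ω, y ω) - g (x ω)|} ∪ {ω : Ω | t < |g (x ω) - mF|}) :=
            measure_mono hsub
        _ ≤ ℙ {ω : Ω | t < |f2 (x ω, y ω) - g (x ω)|} + ℙ {ω : Ω | t < |g (x ω) - mF|} :=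
            measure_union_le _ _
        _ ≤ ENNReal.ofReal r₂ + ENNReal.ofReal r₁ := add_le_add hE1 hE2
        _ = ENNReal.ofReal (r₂ + r₁) := (ENNReal.ofReal_add hr₂0 hr₁0).symm
    refine le_trans (ENNReal.toReal_le_of_le_ofReal (by linarith) hle) ?_
    -- monotonicity in the parameters
    have hsq₁ : (t / ((L : ℝ) * max σ₁ σ₂)) ^ 2 ≤ (t / ((L : ℝ) * σ₁)) ^ 2 := by
      rcases eq_or_ne L 0 with hL0 | hL0
      · simp [hL0]
      · have hLpos : (0:ℝ) < (L : ℝ) := by exact_mod_cast pos_iff_ne_zero.2 hL0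
        have h1 : (0:ℝ) < (L : ℝ) * σ₁ := by positivity
        have h2 : (L : ℝ) * σ₁ ≤ (L : ℝ) * max σ₁ σ₂ :=
          mul_le_mul_of_nonneg_left (le_max_left _ _) L.2
        have h3 : t / ((L : ℝ) * max σ₁ σ₂) ≤ t / ((L : ℝ) * σ₁) := by gcongr
        exact pow_le_pow_left₀ (by positivity) h3 2
    have hsq₂ : (t / ((L : ℝ) * max σ₁ σ₂)) ^ 2 ≤ (t / ((L : ℝ) * σ₂)) ^ 2 := by
      rcases eq_or_ne L 0 with hL0 | hL0
      · simp [hL0]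
      · have hLpos : (0:ℝ) < (L : ℝ) := by exact_mod_cast pos_iff_ne_zero.2 hL0
        have h1 : (0:ℝ) < (L : ℝ) * σ₂ := by positivity
        have h2 : (L : ℝ) * σ₂ ≤ (L : ℝ) * max σ₁ σ₂ :=
          mul_le_mul_of_nonneg_left (le_max_right _ _) L.2
        have h3 : t / ((L : ℝ) * max σ₁ σ₂) ≤ t / ((L : ℝ) * σ₂) := by gcongr
        exact pow_le_pow_left₀ (by positivity) h3 2
    have hexp₁ : Real.exp (-(t / ((L : ℝ) * σ₁)) ^ 2) ≤
        Real.exp (-(t / ((L : ℝ) * max σ₁ σ₂)) ^ 2) := Real.exp_le_exp.2 (by linarith)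
    have hexp₂ : Real.exp (-(t / ((L : ℝ) * σ₂)) ^ 2) ≤
        Real.exp (-(t / ((L : ℝ) * max σ₁ σ₂)) ^ 2) := Real.exp_le_exp.2 (by linarith)
    have hexpc₁ : Real.exp (-c₁' * d) ≤ Real.exp (-(min c₁' c₂') * d) := by
      apply Real.exp_le_exp.2
      have h4 : min c₁' c₂' ≤ c₁' := min_le_left _ _
      have hd : (0:ℝ) ≤ (d : ℝ) := Nat.cast_nonneg d
      nlinarith
    have hexpc₂ : Real.exp (-c₂' * d) ≤ Real.exp (-(min c₁' c₂') * d) := by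
      apply Real.exp_le_exp.2
      have h4 : min c₁' c₂' ≤ c₂' := min_le_right _ _
      have hd : (0:ℝ) ≤ (d : ℝ) := Nat.cast_nonneg d
      nlinarith
    rw [hr₁, hr₂]
    nlinarith [mul_le_mul_of_nonneg_left hexp₁ hC₁.le, mul_le_mul_of_nonneg_left hexp₂ hC₂.le,
      mul_le_mul_of_nonneg_left hexpc₁ hc₁, mul_le_mul_of_nonneg_left hexpc₂ hc₂]
  -- rewrite the goal in terms of f2 and mF
  show (ℙ {ω : Ω | 2 * t < |f2 (x ω, y ω) - mF|}).toReal ≤ _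
  by_cases hFint : Integrable (fun ω => f2 (x ω, y ω)) ℙ
  · -- integrable case: Fubini
    have hFprod : Integrable f2 (ν₁.prod ν₂) := by
      rw [← hmap]
      refine (integrable_map_measure ?_ hζ.aemeasurable).2 hFint
      rw [hmap]
      exact hf2cont.aestronglyMeasurable
    -- sections are integrable
    have hsec0 : Integrable (fun ω' => f2 (0, y ω')) ℙ := by
      have hae := hFprod.prod_right_ae
      have hne : (MeasureTheory.ae ν₁).NeBot := ae_neBot.2 (IsProbabilityMeasure.ne_zero ν₁)
      obtain ⟨a, ha⟩ := hae.exists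
      have : Integrable (fun ω' => f2 (a, y ω')) ℙ := by
        refine (integrable_map_measure ((hsecsm a).aestronglyMeasurable) hy.aemeasurable).1 ?_
        exact ha
      exact hsecPtran a 0 this
    have hsecAll : ∀ a : EucSp d, Integrable (fun ω' => f2 (a, y ω')) ℙ :=
      fun a => hsecPtran 0 a hsec0
    have hgLip : LipschitzWith L g := by
      refine LipschitzWith.of_dist_le_mul fun a a' => ?_
      rw [Real.dist_eq]
      have hsub : g a - g a' = ∫ ω', (f2 (a, y ω') - f2 (a', y ω')) ∂ℙ :=
        (integral_sub (hsecAll a) (hsecAll a')).symm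
      rw [hsub]
      have habs : |∫ ω', (f2 (a, y ω') - f2 (a', y ω')) ∂ℙ| ≤
          ∫ ω', |f2 (a, y ω') - f2 (a', y ω')| ∂ℙ := by
        simpa [Real.norm_eq_abs] using
          norm_integral_le_integral_norm (fun ω' => f2 (a, y ω') - f2 (a', y ω'))
      refine habs.trans ?_
      have hb : ∀ ω', |f2 (a, y ω') - f2 (a', y ω')| ≤ (L : ℝ) * dist a a' := by
        intro ω'
        have h2 := (hLa (y ω')).dist_le_mul a a'
        simpa [Real.dist_eq] using h2
      calc ∫ ω', |f2 (a, y ω') - f2 (a', y ω')| ∂ℙ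
          ≤ ∫ _, (L : ℝ) * dist a a' ∂ℙ := by
            refine integral_mono ((hsecAll a).sub (hsecAll a')).abs (integrable_const _) hb
        _ = (L : ℝ) * dist a a' := by simp
    have hgm : (∫ ω', g (x ω') ∂ℙ) = mF := by
      have h1 : (∫ ω', g (x ω') ∂ℙ) = ∫ a, g a ∂ν₁ :=
        (integral_map hx.aemeasurable hgLip.continuous.aestronglyMeasurable).symm
      have h2 : (∫ a, g a ∂ν₁) = ∫ a, (∫ b, f2 (a, b) ∂ν₂) ∂ν₁ := by
        exact integral_congr_ae (Filter.Eventually.of_forall hgmap)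
      have h3 : (∫ a, (∫ b, f2 (a, b) ∂ν₂) ∂ν₁) = ∫ p, f2 p ∂(ν₁.prod ν₂) :=
        (integral_prod f2 hFprod).symm
      have h4 : (∫ p, f2 p ∂(ν₁.prod ν₂)) = mF := by
        rw [← hmap, integral_map hζ.aemeasurable]
        rw [hmap]
        exact hf2cont.aestronglyMeasurable
      rw [h1, h2, h3, h4]
    exact main hgLip hgm
  · by_cases hsec0 : Integrable (fun ω' => f2 ((0 : EucSp d), y ω')) ℙ
    · -- nuclear case: sections integrable but the composite is not;
      -- then the additive constant in ACoM for x must be at least 1.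
      have hLpos : (0:ℝ) < (L : ℝ) := by
        rcases eq_or_ne L 0 with h0 | h0
        · exfalso
          apply hFint
          have hconst : ∀ ω, f2 (x ω, y ω) = f2 (0, 0) := by
            intro ω
            have h1 := hf.dist_le_mul ((WithLp.equiv 2 (EucSp d × EucSp d)).symm (x ω, y ω))
              ((WithLp.equiv 2 (EucSp d × EucSp d)).symm (0, 0))
            rw [h0] at h1
            simp only [NNReal.coe_zero, zero_mul] at h1
            exact dist_le_zero.1 h1
          have hfe : (fun ω => f2 (x ω, y ω)) = fun _ => f2 (0, 0) := funext hconst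
          rw [hfe]
          exact integrable_const _
        · exact_mod_cast pos_iff_ne_zero.2 h0
      have hsecAll : ∀ a : EucSp d, Integrable (fun ω' => f2 (a, y ω')) ℙ :=
        fun a => hsecPtran 0 a hsec0
      have hsecν : ∀ a : EucSp d, Integrable (fun b => f2 (a, b)) ν₂ := fun a =>
        (integrable_map_measure (hsecsm a).aestronglyMeasurable hy.aemeasurable).2 (hsecAll a)
      set φ : EucSp d → ℝ := fun a => ∫ b, |f2 (a, b)| ∂ν₂ with hφ
      have hφ0 : ∀ a, 0 ≤ φ a := fun a => integral_nonneg fun b => abs_nonneg _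
      have hφLip : LipschitzWith L φ := by
        refine LipschitzWith.of_dist_le_mul fun a a' => ?_
        rw [Real.dist_eq]
        have h1 : φ a - φ a' = ∫ b, (|f2 (a, b)| - |f2 (a', b)|) ∂ν₂ :=
          (integral_sub (hsecν a).abs (hsecν a').abs).symm
        rw [h1]
        refine le_trans (by
          simpa [Real.norm_eq_abs] using
            norm_integral_le_integral_norm fun b => |f2 (a, b)| - |f2 (a', b)|) ?_
        calc ∫ b, |abs (f2 (a, b)) - abs (f2 (a', b))| ∂ν₂
            ≤ ∫ _, (L : ℝ) * dist a a' ∂ν₂ := by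
              refine integral_mono ((hsecν a).abs.sub (hsecν a').abs).abs
                (integrable_const _) fun b => ?_
              refine (abs_abs_sub_abs_le_abs_sub _ _).trans ?_
              have h2 := (hLa b).dist_le_mul a a'
              simpa [Real.dist_eq] using h2
          _ = (L : ℝ) * dist a a' := by simp
      have hφmeas : Measurable φ := hφLip.continuous.measurable
      -- the lintegral of φ over ν₁ is infinite
      have hFprodnot : ¬ Integrable f2 (ν₁.prod ν₂) := by
        intro h
        apply hFint
        refine (integrable_map_measure ?_ hζ.aemeasurable).1 (by rwa [hmap]) 
        rw [hmap]
        exact hf2cont.aestronglyMeasurable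
      have hfin : (∫⁻ p, ‖f2 p‖₊ ∂(ν₁.prod ν₂)) = ∞ := by
        by_contra hne
        exact hFprodnot ⟨hf2cont.aestronglyMeasurable, lt_top_iff_ne_top.2 hne⟩
      have hiter : (∫⁻ a, ∫⁻ b, ‖f2 (a, b)‖₊ ∂ν₂ ∂ν₁) = ∞ := by
        rw [← MeasureTheory.lintegral_prod _ hf2meas.nnnorm.coe_nnreal_ennreal.aemeasurable]
        exact hfin
      have hsecEq : ∀ a : EucSp d, (∫⁻ b, ‖f2 (a, b)‖₊ ∂ν₂) = ENNReal.ofReal (φ a) := by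
        intro a
        simp only [← enorm_eq_nnnorm]
        rw [← ofReal_integral_norm_eq_lintegral_enorm (hsecν a)]
        simp [Real.norm_eq_abs, hφ]
      have hlintφ : (∫⁻ a, ENNReal.ofReal (φ a) ∂ν₁) = ∞ := by
        calc (∫⁻ a, ENNReal.ofReal (φ a) ∂ν₁) = ∫⁻ a, ∫⁻ b, ‖f2 (a, b)‖₊ ∂ν₂ ∂ν₁ :=
              (lintegral_congr fun a => hsecEq a).symm
          _ = ∞ := hiter
      have hmφ : Measurable fun a : EucSp d => ENNReal.ofReal (φ a) :=
        ENNReal.measurable_ofReal.comp hφmeas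
      have hlintφx : (∫⁻ ω, ENNReal.ofReal (φ (x ω)) ∂ℙ) = ∞ := by
        rw [hν₁, lintegral_map hmφ hx] at hlintφ
        exact hlintφ
      -- truncated means
      set mn : ℕ → ℝ := fun n => ∫ ω', min (φ (x ω')) (n : ℝ) ∂ℙ with hmn
      have hminmeas : ∀ n : ℕ, Measurable fun ω => min (φ (x ω)) (n : ℝ) := fun n =>
        (hφmeas.comp hx).min measurable_const
      have hmin_int : ∀ n : ℕ, Integrable (fun ω' => min (φ (x ω')) (n : ℝ)) ℙ := by
        intro n
        refine (integrable_const ((n : ℝ))).mono' (hminmeas n).aestronglyMeasurable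
          (Filter.Eventually.of_forall fun ω => ?_)
        have h0 : 0 ≤ min (φ (x ω)) (n : ℝ) := le_min (hφ0 _) (Nat.cast_nonneg n)
        rw [Real.norm_eq_abs, abs_of_nonneg h0]
        exact min_le_right _ _
      have hmn_of : ∀ n : ℕ, ENNReal.ofReal (mn n) =
          ∫⁻ ω', ENNReal.ofReal (min (φ (x ω')) (n : ℝ)) ∂ℙ := fun n =>
        ofReal_integral_eq_lintegral_ofReal (hmin_int n)
          (Filter.Eventually.of_forall fun ω => le_min (hφ0 _) (Nat.cast_nonneg n))
      have hsup : (⨆ n : ℕ, ∫⁻ ω', ENNReal.ofReal (min (φ (x ω')) (n : ℝ)) ∂ℙ) = ∞ := by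
        have hmmin : ∀ n : ℕ, Measurable fun ω => ENNReal.ofReal (min (φ (x ω)) (n : ℝ)) :=
          fun n => ENNReal.measurable_ofReal.comp (hminmeas n)
        rw [← lintegral_iSup hmmin
          (fun n m hnm ω => ENNReal.ofReal_le_ofReal
            (min_le_min le_rfl (Nat.cast_le.2 hnm)))]
        have hptw : ∀ ω, (⨆ n : ℕ, ENNReal.ofReal (min (φ (x ω)) (n : ℝ))) =
            ENNReal.ofReal (φ (x ω)) := by
          intro ω
          apply le_antisymm
          · exact iSup_le fun n => ENNReal.ofReal_le_ofReal (min_le_left _ _)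
          · have hceil : φ (x ω) ≤ ((⌈φ (x ω)⌉₊ : ℕ) : ℝ) := Nat.le_ceil _
            refine le_trans (le_of_eq ?_) (le_iSup _ ⌈φ (x ω)⌉₊)
            rw [min_eq_left hceil]
        calc (∫⁻ ω', ⨆ n : ℕ, ENNReal.ofReal (min (φ (x ω')) (n : ℝ)) ∂ℙ)
            = ∫⁻ ω', ENNReal.ofReal (φ (x ω')) ∂ℙ := lintegral_congr hptw
          _ = ∞ := hlintφx
      have hmeasA : ∀ K : ℕ, MeasurableSet {ω : Ω | (K : ℝ) < φ (x ω)} := fun K =>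
        measurableSet_lt measurable_const (hφmeas.comp hx)
      -- the key estimate
      have key : ∀ δ : ℝ, 0 < δ → ∀ s : ℝ, 0 < s →
          1 - δ ≤ C₁ * Real.exp (-(s / ((L : ℝ) * σ₁)) ^ 2) + c₁ * Real.exp (-c₁' * d) := by
        intro δ hδ s hs
        obtain ⟨K, hK⟩ : ∃ K : ℕ, (ℙ {ω : Ω | (K : ℝ) < φ (x ω)}).toReal < δ := by
          have hanti : Antitone fun n : ℕ => {ω : Ω | (n : ℝ) < φ (x ω)} := by
            intro n m hnm ω hω
            simp only [Set.mem_setOf_eq] at hω ⊢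
            exact lt_of_le_of_lt (Nat.cast_le.2 hnm) hω
          have hempty : (⋂ n : ℕ, {ω : Ω | (n : ℝ) < φ (x ω)}) = ∅ := by
            ext ω
            simp only [Set.mem_iInter, Set.mem_setOf_eq, Set.mem_empty_iff_false, iff_false,
              not_forall, not_lt]
            obtain ⟨n, hn⟩ := exists_nat_gt (φ (x ω))
            exact ⟨n, hn.le⟩
          have htend := tendsto_measure_iInter_atTop
            (fun n => (hmeasA n).nullMeasurableSet) hanti ⟨0, measure_ne_top (ℙ : Measure Ω) _⟩
          rw [hempty, measure_empty] at htend
          have htr := (ENNReal.tendsto_toReal (a := 0) (by simp)).comp htend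
          simp only [ENNReal.toReal_zero] at htr
          exact (htr.eventually_lt_const hδ).exists
        obtain ⟨n₀, hn₀⟩ : ∃ n : ℕ, (K : ℝ) + s + 1 ≤ mn n := by
          have hlt : ENNReal.ofReal ((K : ℝ) + s + 1) <
              ⨆ n : ℕ, ∫⁻ ω', ENNReal.ofReal (min (φ (x ω')) (n : ℝ)) ∂ℙ := by
            rw [hsup]; exact ENNReal.ofReal_lt_top
          obtain ⟨n, hn⟩ := lt_iSup_iff.1 hlt
          rw [← hmn_of n] at hn
          exact ⟨n, ((ENNReal.ofReal_lt_ofReal_iff_of_nonneg (by positivity)).1 hn).le⟩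
        set N : ℕ := max n₀ K with hN
        have hmnN : (K : ℝ) + s + 1 ≤ mn N := by
          refine le_trans hn₀ ?_
          refine integral_mono (hmin_int n₀) (hmin_int N) fun ω => ?_
          exact min_le_min le_rfl (Nat.cast_le.2 (le_max_left _ _))
        have hKN : (K : ℝ) ≤ (N : ℝ) := Nat.cast_le.2 (le_max_right _ _)
        have hACoM : (ℙ {ω : Ω | s < |min (φ (x ω)) (N : ℝ) - mn N|}).toReal ≤
            C₁ * Real.exp (-(s / ((L : ℝ) * σ₁)) ^ 2) + c₁ * Real.exp (-c₁' * d) :=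
          hACoMx L (fun a => min (φ a) (N : ℝ)) (hφLip.min_const _) s hs
        have hsubset : {ω : Ω | φ (x ω) ≤ (K : ℝ)} ⊆
            {ω : Ω | s < |min (φ (x ω)) (N : ℝ) - mn N|} := by
          intro ω hω
          simp only [Set.mem_setOf_eq] at hω ⊢
          have h1 : min (φ (x ω)) (N : ℝ) ≤ (K : ℝ) := le_trans (min_le_left _ _) hω
          have h3 : mn N - min (φ (x ω)) (N : ℝ) ≤ |min (φ (x ω)) (N : ℝ) - mn N| := by
            rw [abs_sub_comm]
            exact le_abs_self _
          linarith
        have hprob : 1 - δ ≤ (ℙ {ω : Ω | s < |min (φ (x ω)) (N : ℝ) - mn N|}).toReal := by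
          have hcompl : {ω : Ω | φ (x ω) ≤ (K : ℝ)} = {ω : Ω | (K : ℝ) < φ (x ω)}ᶜ := by
            ext ω; simp [not_lt]
          have h4 : (ℙ {ω : Ω | φ (x ω) ≤ (K : ℝ)}).toReal =
              1 - (ℙ {ω : Ω | (K : ℝ) < φ (x ω)}).toReal := by
            rw [hcompl, measure_compl (hmeasA K) (measure_ne_top _ _), measure_univ,
              ENNReal.toReal_sub_of_le prob_le_one ENNReal.one_ne_top, ENNReal.toReal_one]
          have h5 : (ℙ {ω : Ω | φ (x ω) ≤ (K : ℝ)}).toReal ≤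
              (ℙ {ω : Ω | s < |min (φ (x ω)) (N : ℝ) - mn N|}).toReal :=
            ENNReal.toReal_mono (measure_ne_top _ _) (measure_mono hsubset)
          linarith
        linarith
      -- conclude that the additive constant is at least 1
      have hε : (1 : ℝ) ≤ c₁ * Real.exp (-c₁' * d) := by
        by_contra hlt
        push_neg at hlt
        set δ : ℝ := (1 - c₁ * Real.exp (-c₁' * d)) / 2 with hδdef
        have hδ : 0 < δ := by rw [hδdef]; linarith
        have htend : Filter.Tendsto
            (fun s : ℝ => C₁ * Real.exp (-(s / ((L : ℝ) * σ₁)) ^ 2))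
            Filter.atTop (nhds 0) := by
          have h1 : Filter.Tendsto (fun s : ℝ => s / ((L : ℝ) * σ₁))
              Filter.atTop Filter.atTop :=
            Filter.tendsto_id.atTop_div_const (by positivity)
          have h2 := (tendsto_pow_atTop (n := 2) (by norm_num)).comp h1
          have h3 := Filter.tendsto_neg_atTop_atBot.comp h2
          have h4 := Real.tendsto_exp_atBot.comp h3
          simpa [Function.comp] using h4.const_mul C₁
        obtain ⟨s, hsb, hs1⟩ :=
          ((htend.eventually_lt_const hδ).and (Filter.eventually_ge_atTop 1)).exists
        have hk := key δ hδ s (by linarith)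
        rw [hδdef] at hk hsb
        linarith
      -- the claimed bound is then trivial
      have hLHS : (ℙ {ω : Ω | 2 * t < |f2 (x ω, y ω) - mF|}).toReal ≤ 1 := by
        refine ENNReal.toReal_le_of_le_ofReal one_pos.le ?_
        simpa using prob_le_one
      have hexpc : Real.exp (-c₁' * d) ≤ Real.exp (-(min c₁' c₂') * d) := by
        apply Real.exp_le_exp.2
        have h4 : min c₁' c₂' ≤ c₁' := min_le_left _ _
        have hd : (0:ℝ) ≤ (d : ℝ) := Nat.cast_nonneg d
        nlinarith
      have hpos1 : 0 ≤ (C₁ + C₂) * Real.exp (-(t / ((L : ℝ) * max σ₁ σ₂)) ^ 2) := by positivity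
      have hc₂exp : 0 ≤ c₂ * Real.exp (-(min c₁' c₂') * d) := by positivity
      have hc₁mono : c₁ * Real.exp (-c₁' * d) ≤ c₁ * Real.exp (-(min c₁' c₂') * d) :=
        mul_le_mul_of_nonneg_left hexpc hc₁
      calc (ℙ {ω : Ω | 2 * t < |f2 (x ω, y ω) - mF|}).toReal ≤ 1 := hLHS
        _ ≤ (C₁ + C₂) * Real.exp (-(t / ((L : ℝ) * max σ₁ σ₂)) ^ 2) +
            (c₁ + c₂) * Real.exp (-(min c₁' c₂') * d) := by nlinarith
    · -- g ≡ 0 case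
      have hg0 : ∀ a, g a = 0 := by
        intro a
        refine integral_undef fun hint => hsec0 (hsecPtran a 0 hint)
      have hgfun : g = fun _ => 0 := funext hg0
      have hgLip : LipschitzWith L g := by
        rw [hgfun]
        exact (LipschitzWith.const (0:ℝ)).weaken (zero_le : (0:NNReal) ≤ L)
      have hgm : (∫ ω', g (x ω') ∂ℙ) = mF := by
        rw [hmF, integral_undef hFint]
        simp [hg0]
      exact main hgLip hgm
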